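/- Transport splitting lemma: if X, Y are G-valued random variables and S is a discrete random variable (all possibly dependent), then D(X,Y) ≤ H(S) + Σ_s P(S=s)·D((X|S=s), (Y|S=s)), where D is the entropy transport distance. -/

import Mathlib

open Real
open scoped BigOperators Pointwise Classical

/-- A finitely supported probability space. -/
structure FinProb (Ω : Type*) [Fintype Ω] where
  p : Ω → ℝ
  nonneg : ∀ ω, 0 ≤ p ω
  sum_one : ∑ ω, p ω = 1

/-- Probability that the random variable `X` takes the value `s`. -/
noncomputable def prob {Ω S : Type*} [Fintype Ω] (μ : FinProb Ω) (X : Ω → S) (s : S) : ℝ :=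
  ∑ ω, if X ω = s then μ.p ω else 0

/-- Shannon entropy of a discrete random variable. -/
noncomputable def entropy {Ω S : Type*} [Fintype Ω] (μ : FinProb Ω) (X : Ω → S) : ℝ :=
  ∑ s ∈ Finset.univ.image X, Real.negMulLog (prob μ X s)

/-- Conditional Shannon entropy `H(X|Y) = H(X,Y) - H(Y)`. -/
noncomputable def condEntropy {Ω S T : Type*} [Fintype Ω] (μ : FinProb Ω)
    (X : Ω → S) (Y : Ω → T) : ℝ :=
  entropy μ (fun ω => (X ω, Y ω)) - entropy μ Y

/-- The essential range of a random variable: values attained with positive probability. -/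
noncomputable def rangeF {Ω S : Type*} [Fintype Ω] (μ : FinProb Ω) (X : Ω → S) : Finset S :=
  (Finset.univ.image X).filter (fun s => prob μ X s ≠ 0)

/-- Two random variables (on possibly different spaces) have the same distribution. -/
def IdentDist {Ω Ω' S : Type*} [Fintype Ω] [Fintype Ω'] (μ : FinProb Ω) (X : Ω → S)
    (μ' : FinProb Ω') (Y : Ω' → S) : Prop :=
  ∀ s, prob μ X s = prob μ' Y s

/-- Independence of two random variables. -/
def IndepRV {Ω S T : Type*} [Fintype Ω] (μ : FinProb Ω) (X : Ω → S) (Y : Ω → T) : Prop :=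
  ∀ s t, prob μ (fun ω => (X ω, Y ω)) (s, t) = prob μ X s * prob μ Y t

/-- Joint independence of a finite family of random variables. -/
def IndepFam {Ω ι : Type*} [Fintype Ω] [Fintype ι] {S : ι → Type*}
    (μ : FinProb Ω) (X : ∀ i, Ω → S i) : Prop :=
  ∀ f : ∀ i, S i, prob μ (fun ω i => X i ω) f = ∏ i, prob μ (X i) (f i)

/-- `X` and `Y` are conditionally independent given `W`. -/
def CondIndepGiven {Ω S T U : Type*} [Fintype Ω] (μ : FinProb Ω)
    (X : Ω → S) (Y : Ω → T) (W : Ω → U) : Prop :=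
  ∀ s t u, prob μ (fun ω => (X ω, Y ω, W ω)) (s, t, u) * prob μ W u
    = prob μ (fun ω => (X ω, W ω)) (s, u) * prob μ (fun ω => (Y ω, W ω)) (t, u)

/-- `Y` is determined by `X` (almost surely). -/
def Determines {Ω S T : Type*} [Fintype Ω] (μ : FinProb Ω) (X : Ω → S) (Y : Ω → T) : Prop :=
  ∃ f : S → T, ∀ ω, μ.p ω ≠ 0 → Y ω = f (X ω)

/-- The entropy transport distance between the distributions of `X` and `Y`:
the infimum of `H(Z)` over random variables `Z` (coupled with a copy `X'` of `X`)
such that `X' + Z` is distributed as `Y`. -/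
noncomputable def transDist {Ω₁ Ω₂ G : Type*} [Fintype Ω₁] [Fintype Ω₂] [AddCommGroup G]
    (μ : FinProb Ω₁) (X : Ω₁ → G) (ν : FinProb Ω₂) (Y : Ω₂ → G) : ℝ :=
  sInf {h : ℝ | ∃ (n : ℕ) (μ' : FinProb (Fin n)) (X' Z : Fin n → G),
    IdentDist μ' X' μ X ∧ IdentDist μ' (fun ω => X' ω + Z ω) ν Y ∧ entropy μ' Z = h}

/-- Conditioning a finitely supported probability space on an event `E`
(returning `μ` unchanged if `E` has zero probability). -/
noncomputable def condFinProb {Ω : Type*} [Fintype Ω] (μ : FinProb Ω) (E : Ω → Prop) :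
    FinProb Ω :=
  if h : 0 < ∑ ω, if E ω then μ.p ω else 0 then
    { p := fun ω => if E ω then μ.p ω / (∑ ω', if E ω' then μ.p ω' else 0) else 0
      nonneg := fun ω => by
        try dsimp only
        split
        · exact div_nonneg (μ.nonneg ω) h.le
        · exact le_refl 0
      sum_one := by
        have h' : ∀ ω, (if E ω then μ.p ω / (∑ ω', if E ω' then μ.p ω' else 0) else 0)
            = (if E ω then μ.p ω else 0) / (∑ ω', if E ω' then μ.p ω' else 0) := by
          intro ω; split <;> simp
        rw [Finset.sum_congr rfl (fun ω _ => h' ω), ← Finset.sum_div, div_self h.ne'] }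
  else μ

lemma prob_nonneg {Ω S : Type*} [Fintype Ω] (μ : FinProb Ω) (X : Ω → S) (s : S) :
    0 ≤ prob μ X s := by
  apply Finset.sum_nonneg
  intro ω _
  split
  · exact μ.nonneg ω
  · exact le_rfl

lemma prob_le_one {Ω S : Type*} [Fintype Ω] (μ : FinProb Ω) (X : Ω → S) (s : S) :
    prob μ X s ≤ 1 := by
  rw [← μ.sum_one]
  apply Finset.sum_le_sum
  intro ω _
  split
  · exact le_rfl
  · exact μ.nonneg ω

lemma prob_eq_zero {Ω S : Type*} [Fintype Ω] (μ : FinProb Ω) (X : Ω → S) {s : S}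
    (hs : s ∉ Finset.univ.image X) : prob μ X s = 0 := by
  apply Finset.sum_eq_zero
  intro ω _
  rw [if_neg]
  intro h
  exact hs (Finset.mem_image.2 ⟨ω, Finset.mem_univ ω, h⟩)

lemma sum_prob_eq_one {Ω S : Type*} [Fintype Ω] (μ : FinProb Ω) (X : Ω → S)
    {A : Finset S} (hA : Finset.univ.image X ⊆ A) : ∑ s ∈ A, prob μ X s = 1 := by
  unfold prob
  rw [Finset.sum_comm, ← μ.sum_one]
  apply Finset.sum_congr rfl
  intro ω _
  rw [Finset.sum_ite_eq A (X ω) (fun _ => μ.p ω),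
    if_pos (hA (Finset.mem_image.2 ⟨ω, Finset.mem_univ ω, rfl⟩))]

lemma entropy_eq_sum {Ω S : Type*} [Fintype Ω] (μ : FinProb Ω) (X : Ω → S)
    {A : Finset S} (hA : Finset.univ.image X ⊆ A) :
    entropy μ X = ∑ s ∈ A, Real.negMulLog (prob μ X s) := by
  unfold entropy
  apply Finset.sum_subset hA
  intro s _ hs
  rw [prob_eq_zero μ X hs, Real.negMulLog_zero]

lemma entropy_nonneg {Ω S : Type*} [Fintype Ω] (μ : FinProb Ω) (X : Ω → S) :
    0 ≤ entropy μ X :=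
  Finset.sum_nonneg fun s _ => Real.negMulLog_nonneg (prob_nonneg μ X s) (prob_le_one μ X s)

lemma entropy_congr {Ω Ω' S : Type*} [Fintype Ω] [Fintype Ω'] {μ : FinProb Ω} {X : Ω → S}
    {μ' : FinProb Ω'} {Y : Ω' → S} (h : IdentDist μ X μ' Y) : entropy μ X = entropy μ' Y := by
  rw [entropy_eq_sum μ X (Finset.subset_union_left (s₂ := Finset.univ.image Y)),
    entropy_eq_sum μ' Y (Finset.subset_union_right (s₁ := Finset.univ.image X))]
  exact Finset.sum_congr rfl fun s _ => by rw [h s]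

lemma negMulLog_sum_le {ι : Type*} (A : Finset ι) (f : ι → ℝ) (hf : ∀ i ∈ A, 0 ≤ f i) :
    Real.negMulLog (∑ i ∈ A, f i) ≤ ∑ i ∈ A, Real.negMulLog (f i) := by
  have hS : Real.negMulLog (∑ i ∈ A, f i) = ∑ i ∈ A, -(f i * Real.log (∑ j ∈ A, f j)) := by
    rw [Real.negMulLog, neg_mul, Finset.sum_mul, ← Finset.sum_neg_distrib]
  rw [hS]
  apply Finset.sum_le_sum
  intro i hi
  rw [Real.negMulLog, neg_mul, neg_le_neg_iff]
  rcases eq_or_lt_of_le (hf i hi) with h0 | h0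
  · rw [← h0]; simp
  · apply mul_le_mul_of_nonneg_left _ (hf i hi)
    apply Real.log_le_log h0
    exact Finset.single_le_sum hf hi

noncomputable def FinProb.map {Ω Ω' : Type*} [Fintype Ω] [Fintype Ω'] (μ : FinProb Ω)
    (e : Ω ≃ Ω') : FinProb Ω' where
  p ω' := μ.p (e.symm ω')
  nonneg ω' := μ.nonneg _
  sum_one := (Equiv.sum_comp e.symm μ.p).trans μ.sum_one

lemma prob_map {Ω Ω' S : Type*} [Fintype Ω] [Fintype Ω'] (μ : FinProb Ω) (e : Ω ≃ Ω')
    (X : Ω → S) (s : S) : prob (μ.map e) (X ∘ e.symm) s = prob μ X s :=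
  Equiv.sum_comp e.symm fun ω => if X ω = s then μ.p ω else 0

lemma mem_transSet {Ω₁ Ω₂ Ω' G : Type*} [Fintype Ω₁] [Fintype Ω₂] [Fintype Ω'] [AddCommGroup G]
    (μ : FinProb Ω₁) (X : Ω₁ → G) (ν : FinProb Ω₂) (Y : Ω₂ → G)
    (μ' : FinProb Ω') (X' Z : Ω' → G)
    (h1 : IdentDist μ' X' μ X) (h2 : IdentDist μ' (fun ω => X' ω + Z ω) ν Y) :
    entropy μ' Z ∈ {h : ℝ | ∃ (n : ℕ) (μ'' : FinProb (Fin n)) (X'' Z'' : Fin n → G),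
      IdentDist μ'' X'' μ X ∧ IdentDist μ'' (fun ω => X'' ω + Z'' ω) ν Y ∧
      entropy μ'' Z'' = h} := by
  set e := Fintype.equivFin Ω' with he
  refine ⟨Fintype.card Ω', μ'.map e, X' ∘ e.symm, Z ∘ e.symm, ?_, ?_, ?_⟩
  · intro s; rw [prob_map]; exact h1 s
  · intro s
    rw [show (fun ω => (X' ∘ e.symm) ω + (Z ∘ e.symm) ω)
      = (fun ω => X' ω + Z ω) ∘ e.symm from rfl, prob_map]
    exact h2 s
  · exact entropy_congr fun s => prob_map μ' e Z s

lemma transSet_nonempty {Ω₁ Ω₂ G : Type*} [Fintype Ω₁] [Fintype Ω₂] [AddCommGroup G]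
    (μ : FinProb Ω₁) (X : Ω₁ → G) (ν : FinProb Ω₂) (Y : Ω₂ → G) :
    Set.Nonempty {h : ℝ | ∃ (n : ℕ) (μ'' : FinProb (Fin n)) (X'' Z'' : Fin n → G),
      IdentDist μ'' X'' μ X ∧ IdentDist μ'' (fun ω => X'' ω + Z'' ω) ν Y ∧
      entropy μ'' Z'' = h} := by
  set μ' : FinProb (Ω₁ × Ω₂) :=
    { p := fun ω => μ.p ω.1 * ν.p ω.2
      nonneg := fun ω => mul_nonneg (μ.nonneg _) (ν.nonneg _)
      sum_one := by
        rw [Fintype.sum_prod_type]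
        simp_rw [← Finset.mul_sum, ν.sum_one, mul_one]
        exact μ.sum_one } with hμ'
  have h1 : IdentDist μ' (fun ω => X ω.1) μ X := by
    intro s
    show (∑ ω : Ω₁ × Ω₂, if X ω.1 = s then μ.p ω.1 * ν.p ω.2 else 0)
      = ∑ a, if X a = s then μ.p a else 0
    rw [Fintype.sum_prod_type]
    apply Finset.sum_congr rfl
    intro a _
    by_cases h : X a = s
    · simp only [h, if_true, ← Finset.mul_sum, ν.sum_one, mul_one]
    · simp [h]
  have h2 : IdentDist μ' (fun ω => (fun ω : Ω₁ × Ω₂ => X ω.1) ω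
      + (fun ω : Ω₁ × Ω₂ => Y ω.2 - X ω.1) ω) ν Y := by
    intro s
    show (∑ ω : Ω₁ × Ω₂, if X ω.1 + (Y ω.2 - X ω.1) = s then μ.p ω.1 * ν.p ω.2 else 0)
      = ∑ b, if Y b = s then ν.p b else 0
    simp_rw [add_sub_cancel]
    rw [Fintype.sum_prod_type, Finset.sum_comm]
    apply Finset.sum_congr rfl
    intro b _
    by_cases h : Y b = s
    · simp only [h, if_true, ← Finset.sum_mul, μ.sum_one, one_mul]
    · simp [h]
  exact ⟨_, mem_transSet μ X ν Y μ' _ _ h1 h2⟩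

lemma transDist_le {Ω₁ Ω₂ Ω' G : Type*} [Fintype Ω₁] [Fintype Ω₂] [Fintype Ω'] [AddCommGroup G]
    (μ : FinProb Ω₁) (X : Ω₁ → G) (ν : FinProb Ω₂) (Y : Ω₂ → G)
    (μ' : FinProb Ω') (X' Z : Ω' → G)
    (h1 : IdentDist μ' X' μ X) (h2 : IdentDist μ' (fun ω => X' ω + Z ω) ν Y) :
    transDist μ X ν Y ≤ entropy μ' Z := by
  apply csInf_le
  · refine ⟨0, ?_⟩
    rintro h ⟨n, μ'', X'', Z'', -, -, rfl⟩
    exact entropy_nonneg μ'' Z''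
  · exact mem_transSet μ X ν Y μ' X' Z h1 h2

lemma transDist_exists_lt {Ω₁ Ω₂ G : Type*} [Fintype Ω₁] [Fintype Ω₂] [AddCommGroup G]
    (μ : FinProb Ω₁) (X : Ω₁ → G) (ν : FinProb Ω₂) (Y : Ω₂ → G) {ε : ℝ} (hε : 0 < ε) :
    ∃ (n : ℕ) (μ' : FinProb (Fin n)) (X' Z : Fin n → G),
      IdentDist μ' X' μ X ∧ IdentDist μ' (fun ω => X' ω + Z ω) ν Y ∧
      entropy μ' Z < transDist μ X ν Y + ε := by
  obtain ⟨a, ⟨n, μ', X', Z, ha1, ha2, ha3⟩, hlt⟩ :=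
    Real.lt_sInf_add_pos (transSet_nonempty μ X ν Y) hε
  exact ⟨n, μ', X', Z, ha1, ha2, ha3 ▸ hlt⟩

lemma prob_cond_mul {Ω U T : Type*} [Fintype Ω] (μ : FinProb Ω) (S : Ω → T) (s : T)
    (hP : prob μ S s ≠ 0) (X : Ω → U) (x : U) :
    prob μ S s * prob (condFinProb μ (fun ω => S ω = s)) X x
      = ∑ ω, if S ω = s then (if X ω = x then μ.p ω else 0) else 0 := by
  have hsum : (∑ ω, if S ω = s then μ.p ω else 0) = prob μ S s := rfl
  have hpos : 0 < ∑ ω, if S ω = s then μ.p ω else 0 := by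
    rw [hsum]
    exact lt_of_le_of_ne (prob_nonneg μ S s) (Ne.symm hP)
  rw [condFinProb, dif_pos hpos]
  unfold prob
  rw [Finset.mul_sum]
  apply Finset.sum_congr rfl
  intro ω _
  dsimp only
  by_cases h2 : S ω = s
  · by_cases h1 : X ω = x
    · simp only [if_pos h1, if_pos h2, hsum]
      rw [mul_comm, div_mul_cancel₀ _ hP]
    · simp [h1, h2]
  · simp [h2]

lemma p_le_prob {Ω T : Type*} [Fintype Ω] (μ : FinProb Ω) (S : Ω → T) (ω : Ω) :
    μ.p ω ≤ prob μ S (S ω) := by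
  have := Finset.single_le_sum (f := fun ω' => if S ω' = S ω then μ.p ω' else 0)
    (fun ω' _ => by split; exacts [μ.nonneg ω', le_rfl])
    (Finset.mem_univ ω)
  simpa [prob] using this

lemma sum_rangeF {Ω T : Type*} [Fintype Ω] (μ : FinProb Ω) (S : Ω → T) (g : Ω → ℝ)
    (hg : ∀ ω, prob μ S (S ω) = 0 → g ω = 0) :
    ∑ s ∈ rangeF μ S, ∑ ω, (if S ω = s then g ω else 0) = ∑ ω, g ω := by
  rw [Finset.sum_comm]
  apply Finset.sum_congr rfl
  intro ω _
  rw [Finset.sum_ite_eq (rangeF μ S) (S ω) (fun _ => g ω)]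
  by_cases h : S ω ∈ rangeF μ S
  · rw [if_pos h]
  · rw [if_neg h, hg ω]
    rw [rangeF, Finset.mem_filter] at h
    push_neg at h
    exact h (Finset.mem_image.2 ⟨ω, Finset.mem_univ ω, rfl⟩)

lemma sum_prob_rangeF {Ω T : Type*} [Fintype Ω] (μ : FinProb Ω) (S : Ω → T) :
    ∑ s ∈ rangeF μ S, prob μ S s = 1 := by
  unfold rangeF
  rw [Finset.sum_filter_ne_zero, sum_prob_eq_one μ S (subset_refl _)]

lemma sum_sigma_univ {ι : Type*} [Fintype ι] {F : ι → Type*} [∀ i, Fintype (F i)]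
    (f : (Σ i, F i) → ℝ) : ∑ x : Σ i, F i, f x = ∑ i, ∑ b, f ⟨i, b⟩ := by
  rw [← Finset.univ_sigma_univ, Finset.sum_sigma]

/-- transport splitting lemma: for `G`-valued random variables `X, Y` and a
discrete random variable `S` on the same space,
`D(X,Y) ≤ H(S) + Σ_s P(S=s)·D((X|S=s), (Y|S=s))`. -/
theorem transDist_splitting {G Ω T : Type*} [AddCommGroup G] [Fintype Ω]
    (μ : FinProb Ω) (X Y : Ω → G) (S : Ω → T) :
    transDist μ X μ Y ≤ entropy μ S +
      ∑ s ∈ Finset.univ.image S, prob μ S s *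
        transDist (condFinProb μ (fun ω => S ω = s)) X
          (condFinProb μ (fun ω => S ω = s)) Y := by
  classical
  apply le_of_forall_pos_le_add
  intro ε hε
  set D : T → ℝ := fun s => transDist (condFinProb μ (fun ω => S ω = s)) X
    (condFinProb μ (fun ω => S ω = s)) Y with hD
  have hex : ∀ s : {x // x ∈ rangeF μ S}, ∃ (n : ℕ) (μ' : FinProb (Fin n)) (X' Z : Fin n → G),
      IdentDist μ' X' (condFinProb μ (fun ω => S ω = s.1)) X ∧
      IdentDist μ' (fun ω => X' ω + Z ω) (condFinProb μ (fun ω => S ω = s.1)) Y ∧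
      entropy μ' Z < D s.1 + ε :=
    fun s => transDist_exists_lt _ _ _ _ hε
  choose n μc Xc Zc hc1 hc2 hc3 using hex
  have hPpos : ∀ s : {x // x ∈ rangeF μ S}, prob μ S s.1 ≠ 0 := fun s =>
    (Finset.mem_filter.1 s.2).2
  set μs : FinProb ((s : {x // x ∈ rangeF μ S}) × Fin (n s)) :=
    { p := fun ω => prob μ S ω.1.1 * (μc ω.1).p ω.2
      nonneg := fun ω => mul_nonneg (prob_nonneg μ S ω.1.1) ((μc ω.1).nonneg ω.2)
      sum_one := by
        rw [sum_sigma_univ]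
        have h1 : ∀ s : {x // x ∈ rangeF μ S}, ∑ b, (μc s).p b = 1 := fun s => (μc s).sum_one
        simp_rw [← Finset.mul_sum, h1, mul_one]
        rw [Finset.sum_coe_sort _ (fun t => prob μ S t)]
        exact sum_prob_rangeF μ S } with hμs
  have hfact : ∀ (W : (s : {x // x ∈ rangeF μ S}) → Fin (n s) → G) (g : G),
      prob μs (fun ω => W ω.1 ω.2) g
        = ∑ s : {x // x ∈ rangeF μ S}, prob μ S s.1 * prob (μc s) (W s) g := by
    intro W g
    show (∑ ω : (s : {x // x ∈ rangeF μ S}) × Fin (n s),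
        if W ω.1 ω.2 = g then prob μ S ω.1.1 * (μc ω.1).p ω.2 else 0) = _
    rw [sum_sigma_univ]
    apply Finset.sum_congr rfl
    intro s _
    show _ = prob μ S s.1 * ∑ b, (if W s b = g then (μc s).p b else 0)
    rw [Finset.mul_sum]
    apply Finset.sum_congr rfl
    intro b _
    rw [mul_ite, mul_zero]
  have key : ∀ (W : (s : {x // x ∈ rangeF μ S}) → Fin (n s) → G) (V : Ω → G),
      (∀ s, IdentDist (μc s) (W s) (condFinProb μ (fun ω => S ω = s.1)) V) →
      IdentDist μs (fun ω => W ω.1 ω.2) μ V := by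
    intro W V h g
    rw [hfact]
    have h2 : ∀ s : {x // x ∈ rangeF μ S}, prob μ S s.1 * prob (μc s) (W s) g
        = ∑ ω, if S ω = s.1 then (if V ω = g then μ.p ω else 0) else 0 := by
      intro s
      rw [h s g, prob_cond_mul μ S s.1 (hPpos s) V g]
    rw [Finset.sum_congr rfl (fun s _ => h2 s),
      Finset.sum_coe_sort _ (fun t => ∑ ω, if S ω = t then (if V ω = g then μ.p ω else 0) else 0),
      sum_rangeF μ S _ ?_]
    · rfl
    · intro ω h0
      have hle := p_le_prob μ S ω
      have hp0 : μ.p ω = 0 := le_antisymm (h0 ▸ hle) (μ.nonneg ω)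
      split <;> simp [hp0]

  have hA : IdentDist μs (fun ω => Xc ω.1 ω.2) μ X := key Xc X hc1
  have hB : IdentDist μs (fun ω => Xc ω.1 ω.2 + Zc ω.1 ω.2) μ Y :=
    key (fun s b => Xc s b + Zc s b) Y hc2
  have step1 : transDist μ X μ Y ≤ entropy μs (fun ω => Zc ω.1 ω.2) :=
    transDist_le μ X μ Y μs _ _ hA hB
  set A : Finset G := Finset.univ.biUnion
    (fun s : {x // x ∈ rangeF μ S} => Finset.univ.image (Zc s)) with hA'
  have hims : ∀ s, Finset.univ.image (Zc s) ⊆ A := fun s => by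
    rw [hA']
    exact Finset.subset_biUnion_of_mem
      (fun s : {x // x ∈ rangeF μ S} => Finset.univ.image (Zc s)) (Finset.mem_univ s)
  have him : Finset.univ.image
      (fun ω : (s : {x // x ∈ rangeF μ S}) × Fin (n s) => Zc ω.1 ω.2) ⊆ A := by
    intro g hg
    obtain ⟨ω, -, rfl⟩ := Finset.mem_image.1 hg
    exact hims ω.1 (Finset.mem_image.2 ⟨ω.2, Finset.mem_univ _, rfl⟩)
  have hHS : ∑ s : {x // x ∈ rangeF μ S}, Real.negMulLog (prob μ S s.1) = entropy μ S := by
    rw [Finset.sum_coe_sort _ (fun t => Real.negMulLog (prob μ S t))]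
    apply Finset.sum_subset (Finset.filter_subset _ _)
    intro t ht hnt
    have h0 : prob μ S t = 0 := by
      by_contra hne
      exact hnt (Finset.mem_filter.2 ⟨ht, hne⟩)
    rw [h0, Real.negMulLog_zero]
  have step2 : entropy μs (fun ω => Zc ω.1 ω.2)
      ≤ entropy μ S + ∑ s : {x // x ∈ rangeF μ S}, prob μ S s.1 * entropy (μc s) (Zc s) := by
    rw [entropy_eq_sum μs _ him]
    calc ∑ g ∈ A, Real.negMulLog (prob μs (fun ω => Zc ω.1 ω.2) g)
        ≤ ∑ g ∈ A, ∑ s : {x // x ∈ rangeF μ S},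
            Real.negMulLog (prob μ S s.1 * prob (μc s) (Zc s) g) := by
          apply Finset.sum_le_sum
          intro g _
          rw [hfact Zc g]
          exact negMulLog_sum_le _ _
            (fun s _ => mul_nonneg (prob_nonneg _ _ _) (prob_nonneg _ _ _))
      _ = ∑ s : {x // x ∈ rangeF μ S}, ∑ g ∈ A,
            (prob (μc s) (Zc s) g * Real.negMulLog (prob μ S s.1)
              + prob μ S s.1 * Real.negMulLog (prob (μc s) (Zc s) g)) := by
          rw [Finset.sum_comm]
          exact Finset.sum_congr rfl fun s _ =>
            Finset.sum_congr rfl fun g _ => Real.negMulLog_mul _ _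
      _ = ∑ s : {x // x ∈ rangeF μ S},
            (Real.negMulLog (prob μ S s.1) + prob μ S s.1 * entropy (μc s) (Zc s)) := by
          apply Finset.sum_congr rfl
          intro s _
          rw [Finset.sum_add_distrib, ← Finset.sum_mul, ← Finset.mul_sum,
            sum_prob_eq_one (μc s) (Zc s) (hims s), one_mul,
            ← entropy_eq_sum (μc s) (Zc s) (hims s)]
      _ = (∑ s : {x // x ∈ rangeF μ S}, Real.negMulLog (prob μ S s.1))
            + ∑ s : {x // x ∈ rangeF μ S}, prob μ S s.1 * entropy (μc s) (Zc s) :=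
          Finset.sum_add_distrib
      _ ≤ _ := by rw [hHS]
  have hDrange : ∑ s ∈ rangeF μ S, prob μ S s * D s
      = ∑ s ∈ Finset.univ.image S, prob μ S s * D s := by
    apply Finset.sum_subset (Finset.filter_subset _ _)
    intro t ht hnt
    have h0 : prob μ S t = 0 := by
      by_contra hne
      exact hnt (Finset.mem_filter.2 ⟨ht, hne⟩)
    rw [h0, zero_mul]
  calc transDist μ X μ Y ≤ entropy μs (fun ω => Zc ω.1 ω.2) := step1
    _ ≤ entropy μ S + ∑ s : {x // x ∈ rangeF μ S}, prob μ S s.1 * entropy (μc s) (Zc s) := step2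
    _ ≤ entropy μ S + ∑ s : {x // x ∈ rangeF μ S}, prob μ S s.1 * (D s.1 + ε) := by
        apply add_le_add le_rfl
        apply Finset.sum_le_sum
        intro s _
        exact mul_le_mul_of_nonneg_left (hc3 s).le (prob_nonneg μ S s.1)
    _ = entropy μ S + ((∑ s : {x // x ∈ rangeF μ S}, prob μ S s.1 * D s.1)
          + (∑ s : {x // x ∈ rangeF μ S}, prob μ S s.1) * ε) := by
        simp_rw [mul_add]
        rw [Finset.sum_add_distrib, ← Finset.sum_mul]
    _ = (entropy μ S + ∑ s ∈ Finset.univ.image S, prob μ S s * D s) + ε := by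
        rw [Finset.sum_coe_sort _ (fun t => prob μ S t * D t),
          Finset.sum_coe_sort _ (fun t => prob μ S t), sum_prob_rangeF, one_mul, hDrange]
        ring
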